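/- Let 0 < λ₁ < ... < λₙ be distinct positive reals. Then the n-fold convolution of Laplace densities with parameters λ₁,...,λₙ has density fₙ(x) = ((-1)^{n+1}/2) A(n)² Σ_{i=1}^n e^{-λᵢ|x|}/(λᵢ E(i,n)) for x ∈ ℝ, where A(n) = Π λᵢ and E(k,n) = Π_{i≠k} (λ_k² - λᵢ²). -/

import Mathlib

open MeasureTheory Filter Set

section Aux
open Finset Polynomial

lemma int_exp_Ioi {c : ℝ} (hc : 0 < c) (r : ℝ) :
    ∫ y in Ioi r, Real.exp (-c*y) = Real.exp (-c*r)/c := by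
  have hderiv : ∀ x ∈ Ici r, HasDerivAt (fun y => -(Real.exp (-c*y)/c)) (Real.exp (-c*x)) x := by
    intro x _
    have h := (((hasDerivAt_id x).const_mul (-c)).exp).div_const c |>.neg
    convert h using 1
    · rfl
    · rfl
    · ext y; simp
    simp only [id_eq]
    field_simp
  have hint : IntegrableOn (fun y => Real.exp (-c*y)) (Ioi r) := exp_neg_integrableOn_Ioi r hc
  have htend : Tendsto (fun y : ℝ => -(Real.exp (-c*y)/c)) atTop (nhds 0) := by
    have h1 : Tendsto (fun y : ℝ => c * y) atTop atTop := Tendsto.const_mul_atTop hc tendsto_id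
    have h2 : Tendsto (fun y : ℝ => Real.exp (-(c*y))) atTop (nhds 0) :=
      Real.tendsto_exp_neg_atTop_nhds_zero.comp h1
    have h3 : Tendsto (fun y : ℝ => -(Real.exp (-(c*y))/c)) atTop (nhds (-(0/c))) :=
      ((h2.div_const c).neg)
    simpa [neg_mul] using h3
  have := MeasureTheory.integral_Ioi_of_hasDerivAt_of_tendsto' hderiv hint htend
  rw [this]; ring

lemma my_integrableOn_exp_Iic {c : ℝ} (hc : 0 < c) (r : ℝ) :
    IntegrableOn (fun y => Real.exp (c*y)) (Iic r) := by
  have A : MeasurableEmbedding fun x : ℝ => -x :=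
    (Homeomorph.neg ℝ).isClosedEmbedding.measurableEmbedding
  have h0 : IntegrableOn (fun y => Real.exp (-c*y)) (Ici (-r)) :=
    (integrableOn_Ici_iff_integrableOn_Ioi).mpr (exp_neg_integrableOn_Ioi _ hc)
  have h1 : IntegrableOn (fun y => Real.exp (-c*y)) (Ici (-r))
      (Measure.map (fun x : ℝ => -x) volume) := by
    rwa [Measure.map_neg_eq_self (volume : Measure ℝ)]
  have h2 := (A.integrableOn_map_iff).mp h1
  have hs : (fun x : ℝ => -x) ⁻¹' (Ici (-r)) = Iic r := by
    ext z; simp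
  have hf : ((fun y : ℝ => Real.exp (-c*y)) ∘ fun x : ℝ => -x) = fun y => Real.exp (c*y) := by
    ext y; simp [Function.comp]
  rwa [hs, hf] at h2

lemma int_exp_Iic {c : ℝ} (hc : 0 < c) (r : ℝ) :
    ∫ y in Iic r, Real.exp (c*y) = Real.exp (c*r)/c := by
  have A := integral_comp_neg_Iic r (fun y => Real.exp (-c*y))
  have h1 : ∫ y in Iic r, Real.exp (c*y) = ∫ y in Iic r, (fun t => Real.exp (-c*t)) (-y) := by
    congr 1; ext y; simp
  rw [h1, A, int_exp_Ioi hc]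
  simp

lemma int_exp_Ioc {c : ℝ} (hc : c ≠ 0) {x : ℝ} (hx : 0 ≤ x) :
    ∫ y in Ioc 0 x, Real.exp (c*y) = (Real.exp (c*x) - 1)/c := by
  rw [← intervalIntegral.integral_of_le hx]
  have : ∀ y ∈ uIcc (0:ℝ) x, HasDerivAt (fun t => Real.exp (c*t)/c) (Real.exp (c*y)) y := by
    intro y _
    have h := (((hasDerivAt_id y).const_mul c).exp).div_const c
    convert h using 1
    · rfl
    · rfl
    · ext y; simp
    simp only [id_eq]
    field_simp
  rw [intervalIntegral.integral_eq_sub_of_hasDerivAt this]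
  · simp; ring
  · exact (Real.continuous_exp.comp (continuous_const.mul continuous_id)).intervalIntegrable 0 x

lemma integrable_exp_abs {a : ℝ} (ha : 0 < a) :
    Integrable (fun y : ℝ => Real.exp (-a * |y|)) := by
  have h1 : IntegrableOn (fun y : ℝ => Real.exp (-a * |y|)) (Iic 0) := by
    apply ((my_integrableOn_exp_Iic ha 0).congr_fun _ measurableSet_Iic)
    intro y hy
    simp only [Set.mem_Iic] at hy
    simp only []
    rw [abs_of_nonpos hy]; ring_nf
  have h2 : IntegrableOn (fun y : ℝ => Real.exp (-a * |y|)) (Ioi 0) := by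
    apply ((exp_neg_integrableOn_Ioi 0 ha).congr_fun _ measurableSet_Ioi)
    intro y hy
    simp only [Set.mem_Ioi] at hy
    simp only []
    rw [abs_of_pos hy]
  have := h1.union h2
  rw [Iic_union_Ioi] at this
  rwa [← integrableOn_univ]

lemma cont_kernel (a b x : ℝ) :
    Continuous (fun y => Real.exp (-a * |y|) * Real.exp (-b * |x - y|)) := by
  fun_prop

lemma integrable_kernel {a b : ℝ} (ha : 0 < a) (hb : 0 < b) (x : ℝ) :
    Integrable (fun y : ℝ => Real.exp (-a * |y|) * Real.exp (-b * |x - y|)) := by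
  apply Integrable.mono (integrable_exp_abs ha) ((cont_kernel a b x).aestronglyMeasurable)
  filter_upwards with y
  rw [Real.norm_eq_abs, Real.norm_eq_abs, abs_of_pos (by positivity), abs_of_pos (Real.exp_pos _)]
  nth_rewrite 2 [← mul_one (Real.exp (-a * |y|))]
  apply mul_le_mul_of_nonneg_left _ (Real.exp_pos _).le
  apply Real.exp_le_one_iff.mpr
  have : 0 ≤ b * |x - y| := by positivity
  linarith

lemma conv_exp_nonneg {a b : ℝ} (ha : 0 < a) (hb : 0 < b) (hab : a ≠ b) {x : ℝ} (hx : 0 ≤ x) :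
    ∫ y, Real.exp (-a * |y|) * Real.exp (-b * |x - y|) =
      2/(b^2 - a^2) * (b * Real.exp (-a*x) - a * Real.exp (-b*x)) := by
  set h : ℝ → ℝ := fun y => Real.exp (-a * |y|) * Real.exp (-b * |x - y|) with hh
  have hint := integrable_kernel ha hb x
  have hsum : 0 < a + b := by linarith
  have hdiff : b - a ≠ 0 := sub_ne_zero.mpr (Ne.symm hab)
  -- split the real line
  have hsplit1 : (∫ y in Iic 0, h y) + (∫ y in Ioi 0, h y) = ∫ y, h y :=
    intervalIntegral.integral_Iic_add_Ioi hint.integrableOn hint.integrableOn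
  have hsplit2 : (∫ y in Ioc 0 x, h y) + (∫ y in Ioi x, h y) = ∫ y in Ioi 0, h y := by
    rw [← setIntegral_union (Ioc_disjoint_Ioi le_rfl) measurableSet_Ioi
      hint.integrableOn hint.integrableOn, Ioc_union_Ioi_eq_Ioi hx]
  -- piece 1
  have p1 : ∫ y in Iic 0, h y = Real.exp (-b*x) * (1/(a+b)) := by
    have : ∫ y in Iic 0, h y = ∫ y in Iic 0, Real.exp (-b*x) * Real.exp ((a+b)*y) := by
      apply setIntegral_congr_fun measurableSet_Iic
      intro y hy
      simp only [Set.mem_Iic] at hy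
      simp only [hh]
      rw [abs_of_nonpos hy, abs_of_nonneg (by linarith), ← Real.exp_add, ← Real.exp_add]
      congr 1; ring
    rw [this, integral_const_mul, int_exp_Iic hsum 0]
    simp
  -- piece 2
  have p2 : ∫ y in Ioc 0 x, h y = Real.exp (-b*x) * ((Real.exp ((b-a)*x) - 1)/(b-a)) := by
    have : ∫ y in Ioc 0 x, h y = ∫ y in Ioc 0 x, Real.exp (-b*x) * Real.exp ((b-a)*y) := by
      apply setIntegral_congr_fun measurableSet_Ioc
      intro y hy
      simp only [Set.mem_Ioc] at hy
      simp only [hh]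
      rw [abs_of_pos hy.1, abs_of_nonneg (by linarith [hy.2]), ← Real.exp_add, ← Real.exp_add]
      congr 1; ring
    rw [this, integral_const_mul, int_exp_Ioc hdiff hx]
  -- piece 3
  have p3 : ∫ y in Ioi x, h y = Real.exp (b*x) * (Real.exp (-(a+b)*x)/(a+b)) := by
    have : ∫ y in Ioi x, h y = ∫ y in Ioi x, Real.exp (b*x) * Real.exp (-(a+b)*y) := by
      apply setIntegral_congr_fun measurableSet_Ioi
      intro y hy
      simp only [Set.mem_Ioi] at hy
      simp only [hh]
      rw [abs_of_pos (by linarith), abs_of_nonpos (by linarith), ← Real.exp_add, ← Real.exp_add]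
      congr 1; ring
    rw [this, integral_const_mul, int_exp_Ioi hsum x]
  rw [← hsplit1, ← hsplit2, p1, p2, p3]
  have e1 : Real.exp ((b-a)*x) = Real.exp (-a*x) / Real.exp (-b*x) := by
    rw [← Real.exp_sub]; congr 1; ring
  have e2 : Real.exp (-(a+b)*x) = Real.exp (-a*x) * Real.exp (-b*x) := by
    rw [← Real.exp_add]; congr 1; ring
  have e3 : Real.exp (b*x) = 1 / Real.exp (-b*x) := by
    rw [eq_div_iff (Real.exp_ne_zero _), ← Real.exp_add]; simp
  rw [e1, e2, e3]
  have hv := Real.exp_ne_zero (-b*x)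
  have hba : b^2 - a^2 ≠ 0 := by
    intro hc
    have : (b-a)*(b+a) = 0 := by ring_nf; linarith [hc]
    rcases mul_eq_zero.mp this with h | h
    · exact hdiff h
    · linarith
  field_simp
  ring

lemma conv_exp {a b : ℝ} (ha : 0 < a) (hb : 0 < b) (hab : a ≠ b) (x : ℝ) :
    ∫ y, Real.exp (-a * |y|) * Real.exp (-b * |x - y|) =
      2/(b^2 - a^2) * (b * Real.exp (-a*|x|) - a * Real.exp (-b*|x|)) := by
  rcases le_or_gt 0 x with hx | hx
  · rw [abs_of_nonneg hx]
    exact conv_exp_nonneg ha hb hab hx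
  · have key : ∫ y, Real.exp (-a * |y|) * Real.exp (-b * |x - y|)
        = ∫ y, Real.exp (-a * |y|) * Real.exp (-b * |(-x) - y|) := by
      rw [← integral_neg_eq_self (fun y => Real.exp (-a * |y|) * Real.exp (-b * |(-x) - y|))]
      congr 1; ext y
      rw [abs_neg]
      congr 2
      rw [show (-x) - (-y) = -(x - y) by ring, abs_neg]
    rw [key, conv_exp_nonneg ha hb hab (by linarith : (0:ℝ) ≤ -x), abs_of_neg hx]

lemma sum_nodalWeight_eq_zero {F : Type*} [Field F] {ι : Type*} [DecidableEq ι]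
    (s : Finset ι) (v : ι → F) (hvs : Set.InjOn v s) (hs : 2 ≤ s.card) :
    ∑ i ∈ s, ∏ j ∈ s.erase i, (v i - v j)⁻¹ = 0 := by
  have hsum := Lagrange.sum_basis hvs (Finset.card_pos.mp (by omega))
  have hcoeff := congrArg (fun p => Polynomial.coeff p (s.card - 1)) hsum
  simp only [Polynomial.finset_sum_coeff] at hcoeff
  rw [Polynomial.coeff_one] at hcoeff
  have hne : s.card - 1 ≠ 0 := by omega
  rw [if_neg (by omega)] at hcoeff
  rw [← hcoeff]
  apply Finset.sum_congr rfl
  intro i hi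
  have hb : Lagrange.basis s v i =
      Polynomial.C (Lagrange.nodalWeight s v i) * Lagrange.nodal (s.erase i) v := by
    rw [Lagrange.basis_eq_prod_sub_inv_mul_nodal_div hi, ← Lagrange.nodal_erase_eq_nodal_div hi]
  rw [hb, Polynomial.coeff_C_mul]
  have hmonic : (Lagrange.nodal (s.erase i) v).Monic := Lagrange.nodal_monic
  have hdeg : (Lagrange.nodal (s.erase i) v).natDegree = s.card - 1 := by
    rw [Lagrange.natDegree_nodal, Finset.card_erase_of_mem hi]
  rw [← hdeg, hmonic.coeff_natDegree, mul_one]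
  rfl

lemma prod_erase_zero {M : Type*} [CommMonoid M] (n : ℕ) (g : Fin (n+1) → M) :
    ∏ j ∈ (univ : Finset (Fin (n+1))).erase 0, g j = ∏ j : Fin n, g j.succ := by
  rw [Fin.univ_succ, Finset.erase_cons, Finset.prod_map]
  rfl

lemma prod_erase_succ {M : Type*} [CommMonoid M] (n : ℕ) (i : Fin n) (g : Fin (n+1) → M) :
    ∏ j ∈ (univ : Finset (Fin (n+1))).erase i.succ, g j
      = g 0 * ∏ j ∈ (univ : Finset (Fin n)).erase i, g j.succ := by
  rw [Fin.univ_succ, Finset.cons_eq_insert, Finset.erase_insert_of_ne (Fin.succ_ne_zero i).symm,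
    Finset.prod_insert (by simp [Finset.mem_erase])]
  congr 1
  rw [show (i.succ : Fin (n+1)) = (⟨Fin.succ, Fin.succ_injective n⟩ : Fin n ↪ Fin (n+1)) i from rfl,
    ← Finset.map_erase, Finset.prod_map]
  rfl

lemma key_sum {n : ℕ} (v : Fin (n+2) → ℝ) (hv : Function.Injective v) :
    ∑ i : Fin (n+1), ((v i.succ - v 0) * ∏ j ∈ (univ : Finset (Fin (n+1))).erase i,
        (v i.succ - v j.succ))⁻¹
      = - (∏ j : Fin (n+1), (v 0 - v j.succ))⁻¹ := by
  have h0 := sum_nodalWeight_eq_zero (univ : Finset (Fin (n+2))) v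
    (hv.injOn) (by simp)
  rw [Fin.sum_univ_succ] at h0
  rw [prod_erase_zero] at h0
  have hterm : ∀ i : Fin (n+1),
      ∏ j ∈ (univ : Finset (Fin (n+2))).erase i.succ, (v i.succ - v j)⁻¹
        = ((v i.succ - v 0) * ∏ j ∈ (univ : Finset (Fin (n+1))).erase i,
            (v i.succ - v j.succ))⁻¹ := by
    intro i
    rw [prod_erase_succ, mul_inv, Finset.prod_inv_distrib]
  simp only [hterm] at h0
  rw [← Finset.prod_inv_distrib]
  linarith [h0]

end Aux

/-- Convolution of two densities on ℝ. -/
noncomputable def convDens (f g : ℝ → ℝ) : ℝ → ℝ := fun x => ∫ y, f y * g (x - y)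

/-- n-fold convolution of densities `f 0, …, f n`. -/
noncomputable def convN : (n : ℕ) → (Fin (n + 1) → ℝ → ℝ) → (ℝ → ℝ)
  | 0, f => f 0
  | n + 1, f => convDens (f 0) (convN n (fun i => f i.succ))

/-- Laplace density with parameter `a`. -/
noncomputable def laplaceDens (a : ℝ) : ℝ → ℝ :=
  fun x => a / 2 * Real.exp (-a * |x|)

section Aux2
open Finset

lemma main_aux (n : ℕ) : ∀ (lam : Fin (n + 1) → ℝ), (∀ i, 0 < lam i) →
    Function.Injective lam →
    ∀ x : ℝ, convN n (fun i => laplaceDens (lam i)) x =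
      (-1:ℝ)^(n+2)/2 * (∏ i, lam i)^2 * ∑ i, Real.exp (-lam i * |x|) /
        (lam i * ∏ j ∈ Finset.univ.erase i, ((lam i)^2 - (lam j)^2)) := by
  induction n with
  | zero =>
    intro lam hpos hinj x
    have h0 := (hpos 0).ne'
    simp only [convN, laplaceDens]
    rw [Fin.sum_univ_succ, Fin.sum_univ_zero, Fin.prod_univ_succ, Fin.prod_univ_zero,
      prod_erase_zero, Fin.prod_univ_zero]
    field_simp
    ring
  | succ n IH =>
    intro lam hpos hinj x
    have ha : 0 < lam 0 := hpos 0
    have hpos' : ∀ i : Fin (n+1), 0 < lam i.succ := fun i => hpos i.succ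
    have hinj' : Function.Injective (fun i : Fin (n+1) => lam i.succ) :=
      fun i j h => Fin.succ_injective _ (hinj h)
    have hsq : ∀ i j : Fin (n+2), i ≠ j → lam i ^ 2 - lam j ^ 2 ≠ 0 := by
      intro i j hij h
      have hfac : (lam i - lam j) * (lam i + lam j) = 0 := by linear_combination h
      rcases mul_eq_zero.mp hfac with h' | h'
      · exact hij (hinj (by linarith))
      · linarith [hpos i, hpos j]
    have hvinj : Function.Injective (fun k : Fin (n+2) => lam k ^ 2) := by
      intro i j h
      by_contra hij
      exact hsq i j hij (by simpa [sub_eq_zero] using h)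
    -- abbreviations (as plain haves to control rewriting)
    set U := Real.exp (-lam 0 * |x|) with hU
    set C : ℝ := (-1:ℝ)^(n+2)/2 * (∏ i : Fin (n+1), lam i.succ)^2 with hC
    set E' : Fin (n+1) → ℝ :=
      fun i => ∏ j ∈ (univ : Finset (Fin (n+1))).erase i, (lam i.succ^2 - lam j.succ^2) with hE'
    set E0 : ℝ := ∏ j : Fin (n+1), (lam 0 ^2 - lam j.succ ^2) with hE0
    have hE'ne : ∀ i, E' i ≠ 0 := by
      intro i
      rw [hE']
      apply Finset.prod_ne_zero_iff.mpr
      intro j hj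
      exact hsq i.succ j.succ (fun hh => (Finset.mem_erase.mp hj).1 ((Fin.succ_injective _ hh).symm))
    have hE0ne : E0 ≠ 0 := by
      rw [hE0]
      apply Finset.prod_ne_zero_iff.mpr
      intro j _
      exact hsq 0 j.succ (Fin.succ_ne_zero j).symm
    have hdne : ∀ i : Fin (n+1), lam i.succ ^ 2 - lam 0 ^ 2 ≠ 0 :=
      fun i => hsq i.succ 0 (Fin.succ_ne_zero i)
    have hane : ∀ i : Fin (n+1), lam 0 ≠ lam i.succ :=
      fun i h => (Fin.succ_ne_zero i).symm (hinj h)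
    -- the convolution as an integral
    have h1 : convN (n+1) (fun i => laplaceDens (lam i)) x
        = ∫ y, laplaceDens (lam 0) y * (convN n (fun i => laplaceDens (lam i.succ)) (x - y)) := rfl
    -- pointwise expansion of the integrand
    have h2 : ∀ y : ℝ, laplaceDens (lam 0) y * (convN n (fun i => laplaceDens (lam i.succ)) (x - y))
        = ∑ i : Fin (n+1), (lam 0 / 2 * C / (lam i.succ * E' i)) *
            (Real.exp (-lam 0 * |y|) * Real.exp (-lam i.succ * |x - y|)) := by
      intro y
      rw [IH (fun i => lam i.succ) hpos' hinj' (x - y)]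
      simp only [laplaceDens, ← hC, Finset.mul_sum]
      apply Finset.sum_congr rfl
      intro i _
      rw [hE']
      ring
    rw [h1]
    rw [integral_congr_ae (Filter.Eventually.of_forall h2)]
    rw [integral_finset_sum _ (fun i _ =>
      (integrable_kernel ha (hpos' i) x).const_mul _)]
    have h3 : ∀ i : Fin (n+1),
        (∫ y, (lam 0 / 2 * C / (lam i.succ * E' i)) *
          (Real.exp (-lam 0 * |y|) * Real.exp (-lam i.succ * |x - y|)))
        = (lam 0 / 2 * C / (lam i.succ * E' i)) *
            (2/(lam i.succ^2 - lam 0^2) * (lam i.succ * U - lam 0 * Real.exp (-lam i.succ * |x|))) := by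
      intro i
      rw [integral_const_mul, conv_exp ha (hpos' i) (hane i) x, hU]
    rw [Finset.sum_congr rfl (fun i _ => h3 i)]
    have hE'app : ∀ i : Fin (n+1), (∏ j ∈ (univ : Finset (Fin (n+1))).erase i,
        (lam i.succ^2 - lam j.succ^2)) = E' i := fun i => by rw [hE']
    -- now the right-hand side
    conv_rhs => rw [Fin.sum_univ_succ, Fin.prod_univ_succ, prod_erase_zero]
    have h4 : ∀ i : Fin (n+1),
        (∏ j ∈ (univ : Finset (Fin (n+2))).erase i.succ, (lam i.succ^2 - lam j^2))
          = (lam i.succ^2 - lam 0^2) * E' i := by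
      intro i
      rw [prod_erase_succ (n+1) i (fun j => lam i.succ^2 - lam j^2), hE'app]
    simp only [h4, ← hE0, ← hU]
    -- split the left sum into the U-part and the rest
    have h5 : ∀ i : Fin (n+1),
        (lam 0 / 2 * C / (lam i.succ * E' i)) *
            (2/(lam i.succ^2 - lam 0^2) * (lam i.succ * U - lam 0 * Real.exp (-lam i.succ * |x|)))
        = (lam 0 * C * U) * ((lam i.succ^2 - lam 0^2) * E' i)⁻¹
          + (-(lam 0^2) * C) * (Real.exp (-lam i.succ * |x|) / (lam i.succ * ((lam i.succ^2 - lam 0^2) * E' i))) := by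
      intro i
      have k1 := hE'ne i
      have k2 := hdne i
      have k3 := (hpos' i).ne'
      field_simp
      ring
    rw [Finset.sum_congr rfl (fun i _ => h5 i), Finset.sum_add_distrib, ← Finset.mul_sum,
      ← Finset.mul_sum]
    -- apply the key algebraic identity
    have h6 := key_sum (fun k => lam k ^ 2) hvinj
    simp only [hE'app, ← hE0] at h6
    rw [h6]
    -- final algebra
    have hCC : (-1:ℝ)^(n+1+2)/2 * (lam 0 * ∏ i : Fin (n+1), lam i.succ)^2 = -(lam 0^2) * C := by
      rw [hC, pow_succ]
      ring
    rw [hCC, mul_add, Finset.mul_sum]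
    have ha' := ha.ne'
    congr 1
    · field_simp

end Aux2

/-- The convolution of Laplace densities with distinct parameters
`0 < λ₁ < … < λ_{n+1}` equals
`((-1)^{(n+1)+1}/2) A² Σᵢ e^{-λᵢ |x|} / (λᵢ E i)` for all real `x`. -/
theorem conv_laplace_densities (n : ℕ) (lam : Fin (n + 1) → ℝ)
    (hpos : ∀ i, 0 < lam i) (hmono : StrictMono lam) :
    ∀ x : ℝ,
      convN n (fun i => laplaceDens (lam i)) x =
        (-1 : ℝ) ^ (n + 2) / 2 * (∏ i, lam i) ^ 2 *
          ∑ i, Real.exp (-lam i * |x|) /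
            (lam i * ∏ j ∈ Finset.univ.erase i, ((lam i) ^ 2 - (lam j) ^ 2)) := by
  intro x
  exact main_aux n lam hpos hmono.injective x
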